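/- For real λ ≠ -1 fixed, the function ξ ↦ ω(λ,ξ) = 1 - ∫_ℝ (1+λ)w(v)/((1+λ)²+(vξ)²)dv, w(v)=e^{-v²}/√π, satisfies on ξ > 0 the linear ODE dω/dξ + (1/ξ + 2(1+λ)²/ξ³) ω = 1/ξ + 2λ(1+λ)/ξ³. -/

import Mathlib

open MeasureTheory Real Filter

noncomputable def w (v : ℝ) : ℝ := Real.exp (-v ^ 2) / Real.sqrt Real.pi

noncomputable def omg (l ξ : ℝ) : ℝ :=
  1 - ∫ v : ℝ, (1 + l) * w v / ((1 + l) ^ 2 + (v * ξ) ^ 2)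

lemma w_nonneg (v : ℝ) : 0 ≤ w v := by unfold w; positivity

lemma w_cont : Continuous w := by unfold w; fun_prop

lemma integral_w : ∫ v : ℝ, w v = 1 := by
  have h : ∫ v : ℝ, Real.exp (-v ^ 2) = Real.sqrt Real.pi := by
    simpa using integral_gaussian 1
  unfold w
  rw [integral_div, h, div_self (by positivity : Real.sqrt Real.pi ≠ 0)]

lemma int_w : Integrable w := by
  have := (integrable_exp_neg_mul_sq (one_pos)).div_const (Real.sqrt Real.pi)
  rw [show w = fun v => Real.exp (-v ^ 2) / Real.sqrt Real.pi from rfl]; simpa using this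

lemma int_v2w : Integrable (fun v : ℝ => v ^ 2 * w v) := by
  have h := (integrable_rpow_mul_exp_neg_mul_sq one_pos (s := 2) (by norm_num)).div_const
    (Real.sqrt Real.pi)
  have he : (fun v : ℝ => v ^ 2 * w v)
      = fun v : ℝ => v ^ (2 : ℝ) * Real.exp (-1 * v ^ 2) / Real.sqrt Real.pi := by
    ext v
    rw [show (2 : ℝ) = ((2 : ℕ) : ℝ) by norm_num, Real.rpow_natCast]
    unfold w; ring_nf
  rw [he]; exact h

lemma int_dom (c : ℝ) : Integrable (fun v : ℝ => c * ((1 + v ^ 2) * w v)) := by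
  have he : (fun v : ℝ => c * ((1 + v ^ 2) * w v)) = fun v => c * (w v + v ^ 2 * w v) := by
    ext v; ring
  rw [he]; exact (int_w.add int_v2w).const_mul c

lemma int_of_bound {g : ℝ → ℝ} (hg : Continuous g) (c : ℝ)
    (h : ∀ v, |g v| ≤ c * ((1 + v ^ 2) * w v)) : Integrable g :=
  (int_dom c).mono' hg.aestronglyMeasurable
    (Eventually.of_forall fun v => by simpa [Real.norm_eq_abs] using h v)

lemma master {a : ℝ} (ha : a ≠ 0) (t : ℝ) (n k : ℕ) (hn : n ≤ 2) :
    Integrable (fun v : ℝ => v ^ n * w v / (a ^ 2 + (v * t) ^ 2) ^ k) := by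
  have ha2 : 0 < a ^ 2 := lt_of_le_of_ne (sq_nonneg a) (Ne.symm (pow_ne_zero 2 ha))
  have hD : ∀ v : ℝ, 0 < a ^ 2 + (v * t) ^ 2 :=
    fun v => add_pos_of_pos_of_nonneg ha2 (sq_nonneg _)
  apply int_of_bound ?_ (((a ^ 2) ^ k)⁻¹)
  · intro v
    have hvn : |v| ^ n ≤ 1 + v ^ 2 := by
      interval_cases n
      · simp; nlinarith [sq_nonneg v]
      · nlinarith [sq_nonneg (|v| - 1), sq_abs v, abs_nonneg v]
      · rw [sq_abs]; nlinarith [sq_nonneg v]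
    calc |v ^ n * w v / (a ^ 2 + (v * t) ^ 2) ^ k|
        = |v| ^ n * w v / (a ^ 2 + (v * t) ^ 2) ^ k := by
          rw [abs_div, abs_mul, abs_pow, abs_of_nonneg (w_nonneg v),
            abs_of_pos (pow_pos (hD v) k)]
      _ ≤ (1 + v ^ 2) * w v / (a ^ 2) ^ k := by
          have h1 : (a ^ 2) ^ k ≤ (a ^ 2 + (v * t) ^ 2) ^ k := by
            gcongr
            exact le_add_of_nonneg_right (sq_nonneg _)
          have h2 : |v| ^ n * w v ≤ (1 + v ^ 2) * w v :=
            mul_le_mul_of_nonneg_right hvn (w_nonneg v)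
          exact div_le_div₀ (mul_nonneg (by positivity) (w_nonneg v)) h2 (pow_pos ha2 k) h1
      _ = ((a ^ 2) ^ k)⁻¹ * ((1 + v ^ 2) * w v) := div_eq_inv_mul _ _
  · exact Continuous.div ((continuous_pow n).mul w_cont)
      ((continuous_const.add ((continuous_id.mul continuous_const).pow 2)).pow k)
      (fun v => pow_ne_zero k (ne_of_gt (hD v)))

lemma w_hasDerivAt (v : ℝ) :
    HasDerivAt w (Real.exp (-v ^ 2) * -(2 * v) / Real.sqrt Real.pi) v := by
  have h1 : HasDerivAt (fun x : ℝ => -x ^ 2) (-(2 * v)) v := by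
    simpa using (hasDerivAt_pow 2 v).fun_neg
  exact h1.exp.div_const _

/-- for fixed real λ ≠ -1, the function ξ ↦ ω(λ,ξ) satisfies
on ξ > 0 the linear ODE dω/dξ + (1/ξ + 2(1+λ)²/ξ³) ω = 1/ξ + 2λ(1+λ)/ξ³. -/
theorem stmt18 (l : ℝ) (hl : l ≠ -1) (ξ : ℝ) (hξ : 0 < ξ) :
    HasDerivAt (fun ξ : ℝ => omg l ξ)
      (1 / ξ + 2 * l * (1 + l) / ξ ^ 3
        - (1 / ξ + 2 * (1 + l) ^ 2 / ξ ^ 3) * omg l ξ) ξ := by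
  obtain ⟨a, haeq⟩ : ∃ a : ℝ, a = 1 + l := ⟨_, rfl⟩
  have ha : a ≠ 0 := by rw [haeq]; intro h; apply hl; linarith
  have ha2 : 0 < a ^ 2 := lt_of_le_of_ne (sq_nonneg a) (Ne.symm (pow_ne_zero 2 ha))
  have hD : ∀ t v : ℝ, 0 < a ^ 2 + (v * t) ^ 2 :=
    fun t v => add_pos_of_pos_of_nonneg ha2 (sq_nonneg _)
  have hξ0 : ξ ≠ 0 := ne_of_gt hξ
  -- integrability facts
  have hJ1int : Integrable (fun v : ℝ => w v / (a ^ 2 + (v * ξ) ^ 2)) := by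
    simpa using master ha ξ 0 1 (by norm_num)
  have hJ2int : Integrable (fun v : ℝ => v ^ 2 * w v / (a ^ 2 + (v * ξ) ^ 2)) := by
    simpa using master ha ξ 2 1 (by norm_num)
  have hJ3int : Integrable (fun v : ℝ => v ^ 2 * w v / (a ^ 2 + (v * ξ) ^ 2) ^ 2) :=
    master ha ξ 2 2 le_rfl
  have hgint : Integrable (fun v : ℝ => v * w v / (a ^ 2 + (v * ξ) ^ 2)) := by
    simpa using master ha ξ 1 1 (by norm_num)
  have hFint : ∀ t : ℝ, Integrable (fun v : ℝ => a * w v / (a ^ 2 + (v * t) ^ 2)) := by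
    intro t
    have := (master ha t 0 1 (by norm_num)).const_mul a
    simpa [← mul_div_assoc] using this
  have hFcont : ∀ t : ℝ, Continuous (fun v : ℝ => a * w v / (a ^ 2 + (v * t) ^ 2)) :=
    fun t => Continuous.div (continuous_const.mul w_cont)
      (continuous_const.add ((continuous_id.mul continuous_const).pow 2))
      (fun v => ne_of_gt (hD t v))
  -- differentiation under the integral sign
  have key := hasDerivAt_integral_of_dominated_loc_of_deriv_le (μ := volume) (x₀ := ξ) (s := Metric.ball ξ ξ)
      (F := fun t v => a * w v / (a ^ 2 + (v * t) ^ 2))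
      (F' := fun t v => -(2 * a * v ^ 2 * t * w v) / (a ^ 2 + (v * t) ^ 2) ^ 2)
      (bound := fun v => (4 * ξ * |a| / (a ^ 2 * a ^ 2)) * ((1 + v ^ 2) * w v))
      (Metric.ball_mem_nhds ξ hξ)
      (Eventually.of_forall fun t => (hFcont t).aestronglyMeasurable)
      (hFint ξ)
      (Continuous.aestronglyMeasurable (Continuous.div
        ((((continuous_const.mul (continuous_pow 2)).mul continuous_const).mul w_cont).neg)
        ((continuous_const.add ((continuous_id.mul continuous_const).pow 2)).pow 2)
        (fun v => pow_ne_zero 2 (ne_of_gt (hD ξ v)))))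
      (Eventually.of_forall (fun v => by
        intro t ht
        rw [Metric.mem_ball, Real.dist_eq] at ht
        have h2 := abs_lt.mp ht
        have htabs : |t| ≤ 2 * ξ := abs_le.mpr ⟨by linarith, by linarith⟩
        have hnum : |(-(2 * a * v ^ 2 * t * w v))| = 2 * |a| * v ^ 2 * |t| * w v := by
          rw [abs_neg, abs_mul, abs_mul, abs_mul, abs_mul, abs_two,
            abs_of_nonneg (w_nonneg v), abs_of_nonneg (sq_nonneg v)]
        have hden : a ^ 2 * a ^ 2 ≤ (a ^ 2 + (v * t) ^ 2) ^ 2 := by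
          nlinarith [sq_nonneg (v * t), ha2.le]
        have hnum2 : 2 * |a| * v ^ 2 * |t| * w v ≤ 2 * |a| * (1 + v ^ 2) * (2 * ξ) * w v := by
          calc 2 * |a| * v ^ 2 * |t| * w v = (v ^ 2 * |t|) * (2 * |a| * w v) := by ring
            _ ≤ ((1 + v ^ 2) * (2 * ξ)) * (2 * |a| * w v) := by
                apply mul_le_mul_of_nonneg_right _ (mul_nonneg (by positivity) (w_nonneg v))
                exact mul_le_mul (le_add_of_nonneg_left one_pos.le) htabs (abs_nonneg t)
                  (by positivity)
            _ = 2 * |a| * (1 + v ^ 2) * (2 * ξ) * w v := by ring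
        calc ‖-(2 * a * v ^ 2 * t * w v) / (a ^ 2 + (v * t) ^ 2) ^ 2‖
            = 2 * |a| * v ^ 2 * |t| * w v / (a ^ 2 + (v * t) ^ 2) ^ 2 := by
              rw [Real.norm_eq_abs, abs_div, hnum, abs_of_pos (pow_pos (hD t v) 2)]
          _ ≤ 2 * |a| * (1 + v ^ 2) * (2 * ξ) * w v / (a ^ 2 * a ^ 2) := by
              exact div_le_div₀
                (mul_nonneg (by positivity) (w_nonneg v))
                hnum2 (by positivity) hden
          _ = (4 * ξ * |a| / (a ^ 2 * a ^ 2)) * ((1 + v ^ 2) * w v) := by ring))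
      (int_dom _)
      (Eventually.of_forall (fun v => by
        intro t ht
        have hden : HasDerivAt (fun s : ℝ => a ^ 2 + (v * s) ^ 2)
            (0 + 2 * (v * t) ^ 1 * (v * 1)) t :=
          (hasDerivAt_const t (a ^ 2)).add (((hasDerivAt_id t).const_mul v).pow 2)
        have h := (hasDerivAt_const t (a * w v)).fun_div hden (ne_of_gt (hD t v))
        refine h.congr_deriv (Eq.symm ?_)
        field_simp
        ring))
  have hder := key.2
  -- rewrite the derivative integral
  have hderint : (∫ v : ℝ, -(2 * a * v ^ 2 * ξ * w v) / (a ^ 2 + (v * ξ) ^ 2) ^ 2)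
      = (-(2 * a * ξ)) * ∫ v : ℝ, v ^ 2 * w v / (a ^ 2 + (v * ξ) ^ 2) ^ 2 := by
    rw [← integral_const_mul]
    congr 1; funext v; ring
  -- value of the integral as a * J1
  have hIval : (∫ v : ℝ, a * w v / (a ^ 2 + (v * ξ) ^ 2))
      = a * ∫ v : ℝ, w v / (a ^ 2 + (v * ξ) ^ 2) := by
    rw [← integral_const_mul]
    congr 1; funext v; ring
  -- identity B
  have hB : ξ ^ 2 * (∫ v : ℝ, v ^ 2 * w v / (a ^ 2 + (v * ξ) ^ 2))
      = 1 - a ^ 2 * ∫ v : ℝ, w v / (a ^ 2 + (v * ξ) ^ 2) := by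
    rw [← integral_const_mul]
    have h1 : ∀ v : ℝ, ξ ^ 2 * (v ^ 2 * w v / (a ^ 2 + (v * ξ) ^ 2))
        = w v - a ^ 2 * (w v / (a ^ 2 + (v * ξ) ^ 2)) := by
      intro v
      have hne := (hD ξ v).ne'
      field_simp
      ring
    rw [show (fun v : ℝ => ξ ^ 2 * (v ^ 2 * w v / (a ^ 2 + (v * ξ) ^ 2)))
        = fun v : ℝ => w v - a ^ 2 * (w v / (a ^ 2 + (v * ξ) ^ 2)) from funext h1]
    rw [integral_sub int_w (hJ1int.const_mul (a ^ 2)), integral_const_mul, integral_w]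
  -- integration by parts identity
  have hz : ∫ v : ℝ, (w v / (a ^ 2 + (v * ξ) ^ 2) - 2 * (v ^ 2 * w v / (a ^ 2 + (v * ξ) ^ 2))
      - 2 * ξ ^ 2 * (v ^ 2 * w v / (a ^ 2 + (v * ξ) ^ 2) ^ 2)) = 0 := by
    apply integral_eq_zero_of_hasDerivAt_of_integrable
      (f := fun v : ℝ => v * w v / (a ^ 2 + (v * ξ) ^ 2))
    · intro v
      have hn : HasDerivAt (fun v : ℝ => v * w v)
          (1 * w v + v * (Real.exp (-v ^ 2) * -(2 * v) / Real.sqrt Real.pi)) v :=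
        (hasDerivAt_id v).mul (w_hasDerivAt v)
      have hden : HasDerivAt (fun x : ℝ => a ^ 2 + (x * ξ) ^ 2)
          (0 + 2 * (v * ξ) ^ 1 * (1 * ξ)) v :=
        (hasDerivAt_const v (a ^ 2)).add (((hasDerivAt_id v).mul_const ξ).pow 2)
      have h := hn.fun_div hden (ne_of_gt (hD ξ v))
      refine h.congr_deriv (Eq.symm ?_)
      have hw : w v = Real.exp (-v ^ 2) / Real.sqrt Real.pi := rfl
      have hne := (hD ξ v).ne'
      rw [hw]
      field_simp
      ring
    · exact (hJ1int.sub (hJ2int.const_mul 2)).sub (hJ3int.const_mul (2 * ξ ^ 2))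
    · exact hgint
  have hzval : (∫ v : ℝ, w v / (a ^ 2 + (v * ξ) ^ 2))
      - 2 * (∫ v : ℝ, v ^ 2 * w v / (a ^ 2 + (v * ξ) ^ 2))
      - 2 * ξ ^ 2 * (∫ v : ℝ, v ^ 2 * w v / (a ^ 2 + (v * ξ) ^ 2) ^ 2) = 0 := by
    have eA : (∫ v : ℝ, (w v / (a ^ 2 + (v * ξ) ^ 2) - 2 * (v ^ 2 * w v / (a ^ 2 + (v * ξ) ^ 2))
          - 2 * ξ ^ 2 * (v ^ 2 * w v / (a ^ 2 + (v * ξ) ^ 2) ^ 2)))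
        = (∫ v : ℝ, (w v / (a ^ 2 + (v * ξ) ^ 2) - 2 * (v ^ 2 * w v / (a ^ 2 + (v * ξ) ^ 2))))
          - ∫ v : ℝ, 2 * ξ ^ 2 * (v ^ 2 * w v / (a ^ 2 + (v * ξ) ^ 2) ^ 2) :=
      integral_sub (hJ1int.sub (hJ2int.const_mul 2)) (hJ3int.const_mul (2 * ξ ^ 2))
    have eB : (∫ v : ℝ, (w v / (a ^ 2 + (v * ξ) ^ 2) - 2 * (v ^ 2 * w v / (a ^ 2 + (v * ξ) ^ 2))))
        = (∫ v : ℝ, w v / (a ^ 2 + (v * ξ) ^ 2))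
          - ∫ v : ℝ, 2 * (v ^ 2 * w v / (a ^ 2 + (v * ξ) ^ 2)) :=
      integral_sub hJ1int (hJ2int.const_mul 2)
    have eC := integral_const_mul (μ := volume) (2 : ℝ) (fun v : ℝ => v ^ 2 * w v / (a ^ 2 + (v * ξ) ^ 2))
    have eD := integral_const_mul (μ := volume) (2 * ξ ^ 2)
      (fun v : ℝ => v ^ 2 * w v / (a ^ 2 + (v * ξ) ^ 2) ^ 2)
    rw [eA, eB, eC, eD] at hz
    exact hz
  -- final assembly
  have hfinal : HasDerivAt (fun t : ℝ => 1 - ∫ v : ℝ, a * w v / (a ^ 2 + (v * t) ^ 2))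
      (-(∫ v : ℝ, -(2 * a * v ^ 2 * ξ * w v) / (a ^ 2 + (v * ξ) ^ 2) ^ 2)) ξ :=
    hder.const_sub 1
  have homg : (fun t : ℝ => omg l t)
      = fun t : ℝ => 1 - ∫ v : ℝ, a * w v / (a ^ 2 + (v * t) ^ 2) := by
    funext t
    simp only [omg]
    rw [haeq]
  rw [homg]
  convert hfinal using 1
  rw [hderint]
  have homgξ : omg l ξ = 1 - a * ∫ v : ℝ, w v / (a ^ 2 + (v * ξ) ^ 2) := by
    simp only [omg]
    rw [← haeq, hIval]
  rw [homgξ]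
  subst haeq
  set J1 := ∫ v : ℝ, w v / ((1 + l) ^ 2 + (v * ξ) ^ 2) with hJ1def
  set J2 := ∫ v : ℝ, v ^ 2 * w v / ((1 + l) ^ 2 + (v * ξ) ^ 2) with hJ2def
  set J3 := ∫ v : ℝ, v ^ 2 * w v / ((1 + l) ^ 2 + (v * ξ) ^ 2) ^ 2 with hJ3def
  field_simp
  linear_combination (2 * (1 + l)) * hB + ((1 + l) * ξ ^ 2) * hzval
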